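/- arXiv:2011.08775 — 3 statements merged into one kernel-verified Lean document; each statement's English description precedes it below -/
import Mathlib

section
/- Let A₁, ..., A_e be sequences each of the form A(n) = ∏_{k₁=ℓ₁}^{n} ζ₁ ∏_{k₂=ℓ₂}^{k₁} ζ₂ ⋯ ∏_{k_r=ℓ_r}^{k_{r-1}} ζ_r, where ζ₁, ..., ζ_r ∈ ℂ are m-th roots of unity and ℓ₁, ..., ℓ_r ∈ ℕ. Then there exists λ ∈ ℕ with λ ≥ 2 and m ∣ λ, a primitive λ-th root of unity ζ_λ ∈ ℂ, and for each i complex numbers f_{i,0}, ..., f_{i,λ−1} such that A_i(n) = Σ_{j=0}^{λ−1} f_{i,j}·(ζ_λ^n)^j holds for all sufficiently large n ∈ ℕ. -/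
/-- The nested product `∏_{k₁=ℓ₁}^{n} ζ₁ ∏_{k₂=ℓ₂}^{k₁} ζ₂ ⋯ ∏_{k_r=ℓ_r}^{k_{r-1}} ζ_r`,
encoded by the list of pairs `(ζ_j, ℓ_j)`. -/
noncomputable def nestedProd : List (ℂ × ℕ) → ℕ → ℂ
  | [], _ => 1
  | p :: rest, n => ∏ k ∈ Finset.Icc p.2 n, (p.1 * nestedProd rest k)

open Finset in
lemma period_iter (g : ℕ → ℂ) (q N : ℕ) (hg : ∀ n, N ≤ n → g (n + q) = g n) :
    ∀ k n, N ≤ n → g (n + k * q) = g n := by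
  intro k
  induction k with
  | zero => simp
  | succ k ih =>
    intro n hn
    have h : n + (k + 1) * q = (n + k * q) + q := by ring
    rw [h, hg _ (le_trans hn (Nat.le_add_right _ _)), ih n hn]

lemma nestedProd_pow (m : ℕ) (L : List (ℂ × ℕ)) (h : ∀ p ∈ L, p.1 ^ m = 1) (n : ℕ) :
    nestedProd L n ^ m = 1 := by
  induction L generalizing n with
  | nil => simp [nestedProd]
  | cons p rest ih =>
    simp only [nestedProd]
    rw [← Finset.prod_pow]
    apply Finset.prod_eq_one
    intro k _
    rw [mul_pow, h p (List.mem_cons_self), one_mul,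
      ih (fun q hq => h q (List.mem_cons_of_mem _ hq))]

lemma nestedProd_periodic (m : ℕ) (hm : 1 ≤ m) :
    ∀ L : List (ℂ × ℕ), (∀ p ∈ L, p.1 ^ m = 1) →
    ∃ N, ∀ n, N ≤ n → nestedProd L (n + m ^ L.length) = nestedProd L n := by
  intro L
  induction L with
  | nil => exact fun _ => ⟨0, fun n _ => rfl⟩
  | cons p rest ih =>
    intro h
    obtain ⟨N, hN⟩ := ih (fun q hq => h q (List.mem_cons_of_mem _ hq))
    set q := m ^ rest.length with hqdef
    have hq1 : 1 ≤ q := Nat.one_le_pow _ _ hm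
    refine ⟨max N p.2, fun n hn => ?_⟩
    have hNn : N ≤ n := le_trans (le_max_left _ _) hn
    have hpn : p.2 ≤ n := le_trans (le_max_right _ _) hn
    -- multi-period of inner
    have hmulti : ∀ k x, N ≤ x → nestedProd rest (x + k * q) = nestedProd rest x :=
      period_iter _ _ _ hN
    set c : ℕ → ℂ := fun k => p.1 * nestedProd rest k with hc
    have hlen : m ^ (p :: rest).length = q * m := by
      simp [pow_succ, hqdef]
    show ∏ k ∈ Finset.Icc p.2 (n + m ^ (p :: rest).length), c k = ∏ k ∈ Finset.Icc p.2 n, c k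
    rw [hlen]
    have hsplit : ∀ K : ℕ, ∏ k ∈ Finset.Icc p.2 (n + K), c k
        = (∏ k ∈ Finset.Icc p.2 n, c k) * ∏ t ∈ Finset.range K, c (n + 1 + t) := by
      intro K
      rw [← Finset.Ico_add_one_right_eq_Icc, ← Finset.Ico_add_one_right_eq_Icc,
        ← Finset.prod_Ico_consecutive c (by omega : p.2 ≤ n + 1) (by omega : n + 1 ≤ n + K + 1)]
      congr 1
      rw [Finset.prod_Ico_eq_prod_range]
      have hK : n + K + 1 - (n + 1) = K := by omega
      rw [hK]
    rw [hsplit]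
    have hblock : ∀ j : ℕ, ∏ t ∈ Finset.range (q * j), c (n + 1 + t)
        = (∏ t ∈ Finset.range q, c (n + 1 + t)) ^ j := by
      intro j
      induction j with
      | zero => simp
      | succ j ihj =>
        have : q * (j + 1) = q * j + q := by ring
        rw [this, Finset.prod_range_add, ihj, pow_succ]
        congr 1
        apply Finset.prod_congr rfl
        intro t _
        show c (n + 1 + (q * j + t)) = c (n + 1 + t)
        have harr : n + 1 + (q * j + t) = (n + 1 + t) + j * q := by ring
        rw [harr, hc]
        simp only
        rw [hmulti j (n + 1 + t) (by omega)]
    rw [hblock m, ← Finset.prod_pow]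
    have : ∀ t ∈ Finset.range q, c (n + 1 + t) ^ m = 1 := by
      intro t _
      rw [hc]
      simp only
      rw [mul_pow, h p (List.mem_cons_self), one_mul,
        nestedProd_pow m rest (fun r hr => h r (List.mem_cons_of_mem _ hr))]
    rw [Finset.prod_eq_one this, mul_one]

open Finset in
lemma fourier_expand (lam : ℕ) (hl : 1 ≤ lam) (ζ : ℂ) (hζ : IsPrimitiveRoot ζ lam)
    (g : ℕ → ℂ) (N : ℕ) (hg : ∀ n, N ≤ n → g (n + lam) = g n) :
    ∃ f : ℕ → ℂ, ∃ N' : ℕ, ∀ n, N' ≤ n → g n = ∑ j ∈ Finset.range lam, f j * (ζ ^ n) ^ j := by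
  have hζl : ζ ^ lam = 1 := hζ.pow_eq_one
  set M := (N + 1) * lam with hM
  refine ⟨fun j => (lam : ℂ)⁻¹ * ∑ t ∈ Finset.range lam, g (M + t) * ζ ^ ((lam - j) * t),
    M, fun n hn => ?_⟩
  have hMl : lam ≤ M := Nat.le_mul_of_pos_left lam (Nat.succ_pos N)
  have hNM : N + 1 ≤ M := Nat.le_mul_of_pos_right (N + 1) (by omega)
  have hlamn : lam ≤ n := le_trans hMl hn
  have hlam0 : (lam : ℂ) ≠ 0 := Nat.cast_ne_zero.mpr (by omega)
  -- rewrite RHS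
  have key : ∀ j ∈ Finset.range lam, ∀ t ∈ Finset.range lam,
      ζ ^ ((lam - j) * t) * (ζ ^ n) ^ j = (ζ ^ (n - t)) ^ j := by
    intro j hj t ht
    simp only [Finset.mem_range] at hj ht
    have hjl : j ≤ lam := le_of_lt hj
    have htn : t ≤ n := le_trans (le_of_lt ht) hlamn
    rw [← pow_mul, ← pow_add, ← pow_mul]
    have harith : (lam - j) * t + n * j = lam * t + (n - t) * j := by
      zify [hjl, htn]; ring
    rw [harith, pow_add, pow_mul, hζl, one_pow, one_mul, pow_mul]
  calc g n = (lam : ℂ)⁻¹ * ∑ t ∈ Finset.range lam,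
        g (M + t) * ∑ j ∈ Finset.range lam, (ζ ^ (n - t)) ^ j := by
        -- inner sum is lam iff t = n % lam else 0
        rw [Finset.sum_eq_single (n % lam)]
        · have h1 : ζ ^ (n - n % lam) = 1 := by
            have : n - n % lam = lam * (n / lam) := by
              have := Nat.div_add_mod n lam; omega
            rw [this, pow_mul, hζl, one_pow]
          rw [h1]
          simp only [one_pow, Finset.sum_const, Finset.card_range, nsmul_eq_mul, mul_one]
          have hMg : g (M + n % lam) = g n := by
            have h2 : N + 1 ≤ n / lam :=
              (Nat.le_div_iff_mul_le (by omega)).mpr hn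
            have h3 : n = (M + n % lam) + (n / lam - (N + 1)) * lam := by
              have h4 := Nat.div_add_mod n lam
              have h5 : (n / lam - (N + 1)) * lam = (n / lam) * lam - (N + 1) * lam :=
                Nat.sub_mul _ _ _
              have h6 : lam * (n / lam) = (n / lam) * lam := Nat.mul_comm _ _
              have h7 : (N + 1) * lam ≤ (n / lam) * lam := Nat.mul_le_mul_right _ h2
              omega
            rw [← period_iter g lam (M + n % lam) (fun x hx => hg x (by omega))
              (n / lam - (N + 1)) (M + n % lam) le_rfl, ← h3]
          rw [hMg]
          field_simp
        · intro t ht htne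
          simp only [Finset.mem_range] at ht
          have htn : t ≤ n := le_trans (le_of_lt ht) hlamn
          have hnd : ¬ (lam ∣ (n - t)) := by
            intro hdvd
            apply htne
            obtain ⟨c, hc⟩ := hdvd
            have := Nat.div_add_mod n lam
            have : n % lam = t % lam := by
              have h7 : n = t + lam * c := by omega
              rw [h7, Nat.add_mul_mod_self_left]
            rw [Nat.mod_eq_of_lt ht] at this
            omega
          have hne1 : ζ ^ (n - t) ≠ 1 := fun h1 => hnd ((hζ.pow_eq_one_iff_dvd _).mp h1)
          rw [geom_sum_eq hne1, ← pow_mul, mul_comm (n - t) lam, pow_mul, hζl, one_pow]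
          simp
        · intro hmem
          exact absurd (Finset.mem_range.mpr (Nat.mod_lt _ (by omega))) hmem
    _ = ∑ j ∈ Finset.range lam,
        ((lam : ℂ)⁻¹ * ∑ t ∈ Finset.range lam, g (M + t) * ζ ^ ((lam - j) * t)) * (ζ ^ n) ^ j := by
        simp only [Finset.mul_sum, Finset.sum_mul]
        rw [Finset.sum_comm]
        apply Finset.sum_congr rfl
        intro j hj
        apply Finset.sum_congr rfl
        intro t ht
        rw [← key j hj t ht]
        ring

/-- Nested products over `m`-th roots of unity can all be expressed, for large `n`,
as polynomial expressions in a single sequence `ζ_λ^n` where `ζ_λ` is a primitive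
`λ`-th root of unity with `λ ≥ 2` and `m ∣ λ`. -/
theorem nested_root_of_unity_prods_eq_poly_in_single_root
    (e m : ℕ) (hm : 1 ≤ m) (A : Fin e → List (ℂ × ℕ))
    (hA : ∀ i : Fin e, ∀ p ∈ A i, p.1 ^ m = 1) :
    ∃ lam : ℕ, 2 ≤ lam ∧ m ∣ lam ∧
      ∃ ζ : ℂ, IsPrimitiveRoot ζ lam ∧
        ∀ i : Fin e, ∃ f : ℕ → ℂ, ∃ N : ℕ, ∀ n : ℕ, N ≤ n →
          nestedProd (A i) n = ∑ j ∈ Finset.range lam, f j * (ζ ^ n) ^ j := by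
  classical
  set R := Finset.univ.sup (fun i : Fin e => (A i).length) with hR
  set lam := 2 * m ^ (R + 1) with hlam
  have hmpow : 1 ≤ m ^ (R + 1) := Nat.one_le_pow _ _ hm
  have hlam2 : 2 ≤ lam := by
    calc 2 = 2 * 1 := by ring
    _ ≤ 2 * m ^ (R + 1) := Nat.mul_le_mul_left 2 hmpow
  have hmdvd : m ∣ lam := ⟨2 * m ^ R, by rw [hlam, pow_succ]; ring⟩
  have hlam0 : lam ≠ 0 := by omega
  refine ⟨lam, hlam2, hmdvd, Complex.exp (2 * Real.pi * Complex.I / lam),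
    Complex.isPrimitiveRoot_exp lam hlam0, fun i => ?_⟩
  obtain ⟨N, hN⟩ := nestedProd_periodic m hm (A i) (hA i)
  have hdvd : m ^ (A i).length ∣ lam := by
    have hle : (A i).length ≤ R + 1 :=
      le_trans (Finset.le_sup (f := fun i : Fin e => (A i).length) (Finset.mem_univ i)) (Nat.le_succ R)
    exact Dvd.dvd.mul_left (pow_dvd_pow m hle) 2
  obtain ⟨c, hc⟩ := hdvd
  have hper : ∀ n, N ≤ n → nestedProd (A i) (n + lam) = nestedProd (A i) n := by
    intro n hn
    rw [hc, mul_comm, period_iter _ _ _ hN c n hn]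
  exact fourier_expand lam (by omega) _ (Complex.isPrimitiveRoot_exp lam hlam0) _ N hper
end

section
/- Any nested product over roots of unity, i.e. a sequence A : ℕ → ℂ of the form A(n) = ∏_{k₁=1}^{n} ζ₁ ∏_{k₂=1}^{k₁} ζ₂ ⋯ ∏_{k_r=1}^{k_{r-1}} ζ_r with all ζ_j roots of unity, is eventually periodic: there exists λ ≥ 1 such that A(n+λ) = A(n) for all n ∈ ℕ. -/
/-- The nested product `∏_{k₁=1}^{n} ζ₁ ∏_{k₂=1}^{k₁} ζ₂ ⋯ ∏_{k_r=1}^{k_{r-1}} ζ_r`,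
encoded by the list `[ζ₁, …, ζ_r]`. -/
noncomputable def nestedProdOne : List ℂ → ℕ → ℂ
  | [], _ => 1
  | ζ :: rest, n => ∏ k ∈ Finset.Icc 1 n, (ζ * nestedProdOne rest k)

/-- "is a root of unity" predicate -/
def RU (z : ℂ) : Prop := ∃ m : ℕ, 1 ≤ m ∧ z ^ m = 1

lemma RU_one : RU 1 := ⟨1, le_refl 1, one_pow 1⟩

lemma RU_mul {z w : ℂ} (hz : RU z) (hw : RU w) : RU (z * w) := by
  obtain ⟨a, ha, hza⟩ := hz
  obtain ⟨b, hb, hwb⟩ := hw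
  refine ⟨a * b, Nat.one_le_iff_ne_zero.2 (Nat.mul_ne_zero (by omega) (by omega)), ?_⟩
  rw [mul_pow, pow_mul, hza, one_pow, mul_comm a b, pow_mul, hwb, one_pow, one_mul]

lemma RU_prod {s : Finset ℕ} {f : ℕ → ℂ} (h : ∀ i ∈ s, RU (f i)) :
    RU (∏ i ∈ s, f i) :=
  Finset.prod_induction f RU (fun _ _ => RU_mul) RU_one h

lemma RU_nested (L : List ℂ) (hL : ∀ ζ ∈ L, RU ζ) (n : ℕ) :
    RU (nestedProdOne L n) := by
  induction L generalizing n with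
  | nil => exact RU_one
  | cons ζ rest ih =>
      apply RU_prod
      intro k _
      exact RU_mul (hL ζ (List.mem_cons_self))
        (ih (fun z hz => hL z (List.mem_cons_of_mem _ hz)) k)

lemma prod_shift {f : ℕ → ℂ} {μ : ℕ} (hf : ∀ k, f (k + μ) = f k) (n : ℕ) :
    ∏ k ∈ Finset.Icc 1 (n + μ), f k
      = (∏ k ∈ Finset.Icc 1 n, f k) * ∏ k ∈ Finset.Icc 1 μ, f k := by
  induction n with
  | zero => simp
  | succ n ih =>
      have h1 : n + 1 + μ = (n + μ) + 1 := by omega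
      rw [h1, Finset.prod_Icc_succ_top (by omega), ih,
        Finset.prod_Icc_succ_top (by omega : 1 ≤ n + 1)]
      have h2 : f (n + μ + 1) = f (n + 1) := by
        have := hf (n + 1); rw [← this]; ring_nf
      rw [h2]; ring

lemma prod_periodic {f : ℕ → ℂ} {μ : ℕ} (hf : ∀ k, f (k + μ) = f k) (t n : ℕ) :
    ∏ k ∈ Finset.Icc 1 (n + t * μ), f k
      = (∏ k ∈ Finset.Icc 1 n, f k) * (∏ k ∈ Finset.Icc 1 μ, f k) ^ t := by
  induction t with
  | zero => simp
  | succ t ih =>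
      have h1 : n + (t + 1) * μ = (n + t * μ) + μ := by ring
      rw [h1, prod_shift hf, ih, pow_succ, mul_assoc]

/-- A nested product over roots of unity is (eventually, in fact globally) periodic:
there is a `λ ≥ 1` with `A(n+λ) = A(n)` for all `n`. -/
theorem nested_root_of_unity_prod_periodic
    (L : List ℂ) (hL : ∀ ζ ∈ L, ∃ m : ℕ, 1 ≤ m ∧ ζ ^ m = 1) :
    ∃ lam : ℕ, 1 ≤ lam ∧ ∀ n : ℕ, nestedProdOne L (n + lam) = nestedProdOne L n := by
  induction L with
  | nil => exact ⟨1, le_refl 1, fun n => rfl⟩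
  | cons ζ rest ih =>
      obtain ⟨μ, hμ, hper⟩ := ih (fun z hz => hL z (List.mem_cons_of_mem _ hz))
      set f : ℕ → ℂ := fun k => ζ * nestedProdOne rest k with hfdef
      have hf : ∀ k, f (k + μ) = f k := fun k => by
        simp only [hfdef, hper k]
      have hRUc : RU (∏ k ∈ Finset.Icc 1 μ, f k) := by
        apply RU_prod
        intro k _
        exact RU_mul (hL ζ (List.mem_cons_self))
          (RU_nested rest (fun z hz => hL z (List.mem_cons_of_mem _ hz)) k)
      obtain ⟨t, ht, hct⟩ := hRUc
      refine ⟨t * μ, Nat.one_le_iff_ne_zero.2 (Nat.mul_ne_zero (by omega) (by omega)), ?_⟩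
      intro n
      show ∏ k ∈ Finset.Icc 1 (n + t * μ), f k = ∏ k ∈ Finset.Icc 1 n, f k
      rw [prod_periodic hf, hct, mul_one]
end

section
/- Let K be a field of characteristic 0 and f, h ∈ K[x] monic irreducible polynomials. For k ∈ ℤ, one has f(x+k) = h(x) if and only if k is a root of the polynomial p(z) = res_x(h(x), f(x+z)) ∈ K[z] and deg f = deg h, where res_x denotes the resultant with respect to x. In particular, f and h are shift equivalent if and only if p(z) has an integer root (assuming deg f = deg h). -/
open Polynomial

/-- The Sylvester matrix of two polynomials `f, g` over a commutative ring, of size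
`(deg g + deg f) × (deg g + deg f)`. -/
noncomputable def sylvesterMatrix {R : Type*} [CommRing R] (f g : R[X]) :
    Matrix (Fin (g.natDegree + f.natDegree)) (Fin (g.natDegree + f.natDegree)) R :=
  fun i j =>
    if (i : ℕ) < g.natDegree then
      (if (i : ℕ) ≤ (j : ℕ) then f.coeff ((j : ℕ) - (i : ℕ)) else 0)
    else
      (if (i : ℕ) - g.natDegree ≤ (j : ℕ) then
        g.coeff ((j : ℕ) - ((i : ℕ) - g.natDegree)) else 0)

/-- The resultant `res(f, g)` of two polynomials, as the determinant of their
Sylvester matrix. -/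
noncomputable def resultant {R : Type*} [CommRing R] (f g : R[X]) : R :=
  (sylvesterMatrix f g).det

/-- If a Sylvester-type matrix is singular, we get a nontrivial linear relation
`a * A + b * B = 0` with small degrees. -/
lemma syl_aux {K : Type*} [Field K] (n m : ℕ) (A B : K[X])
    (hA : A.natDegree ≤ m) (hB : B.natDegree ≤ n)
    (M : Matrix (Fin (n + m)) (Fin (n + m)) K)
    (hM : ∀ i j : Fin (n + m), M i j =
      if (i : ℕ) < n then (if (i : ℕ) ≤ (j : ℕ) then A.coeff ((j:ℕ) - (i:ℕ)) else 0)
      else (if (i : ℕ) - n ≤ (j : ℕ) then B.coeff ((j:ℕ) - ((i:ℕ) - n)) else 0))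
    (hdet : M.det = 0) :
    ∃ a b : K[X], (a ≠ 0 ∨ b ≠ 0) ∧ a.degree < n ∧ b.degree < m ∧ a * A + b * B = 0 := by
  obtain ⟨v, hv0, hvM⟩ := Matrix.exists_vecMul_eq_zero_iff.mpr hdet
  set S : Finset (Fin (n+m)) := Finset.univ.filter (fun i => (i:ℕ) < n) with hS
  set T : Finset (Fin (n+m)) := Finset.univ.filter (fun i => ¬ (i:ℕ) < n) with hT
  set a : K[X] := ∑ i ∈ S, C (v i) * X ^ (i : ℕ) with ha
  set b : K[X] := ∑ i ∈ T, C (v i) * X ^ ((i : ℕ) - n) with hb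
  have hacoeff : ∀ l : ℕ, a.coeff l = ∑ i ∈ S, (if l = (i:ℕ) then v i else 0) := by
    intro l
    rw [ha, finset_sum_coeff]
    refine Finset.sum_congr rfl fun i _ => ?_
    rw [coeff_C_mul, coeff_X_pow, mul_ite, mul_one, mul_zero]
  have hbcoeff : ∀ l : ℕ, b.coeff l = ∑ i ∈ T, (if l = (i:ℕ) - n then v i else 0) := by
    intro l
    rw [hb, finset_sum_coeff]
    refine Finset.sum_congr rfl fun i _ => ?_
    rw [coeff_C_mul, coeff_X_pow, mul_ite, mul_one, mul_zero]
  have hcoeff : ∀ j : ℕ, (a * A + b * B).coeff j =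
      ∑ i : Fin (n+m), v i *
        (if (i : ℕ) < n then (if (i : ℕ) ≤ j then A.coeff (j - (i:ℕ)) else 0)
         else (if (i : ℕ) - n ≤ j then B.coeff (j - ((i:ℕ) - n)) else 0)) := by
    intro j
    have LA : (a * A).coeff j
        = ∑ i ∈ S, v i * (if (i:ℕ) ≤ j then A.coeff (j - (i:ℕ)) else 0) := by
      rw [ha, Finset.sum_mul, finset_sum_coeff]
      refine Finset.sum_congr rfl fun i _ => ?_
      rw [show C (v i) * X ^ (i:ℕ) * A = C (v i) * (A * X ^ (i:ℕ)) by ring,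
        coeff_C_mul, coeff_mul_X_pow']
    have LB : (b * B).coeff j
        = ∑ i ∈ T, v i * (if (i:ℕ) - n ≤ j then B.coeff (j - ((i:ℕ) - n)) else 0) := by
      rw [hb, Finset.sum_mul, finset_sum_coeff]
      refine Finset.sum_congr rfl fun i _ => ?_
      rw [show C (v i) * X ^ ((i:ℕ) - n) * B = C (v i) * (B * X ^ ((i:ℕ) - n)) by ring,
        coeff_C_mul, coeff_mul_X_pow']
    rw [coeff_add, LA, LB,
      ← Finset.sum_filter_add_sum_filter_not Finset.univ (fun i : Fin (n+m) => (i:ℕ) < n)]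
    congr 1
    · refine Finset.sum_congr rfl fun i hi => ?_
      have : (i:ℕ) < n := (Finset.mem_filter.mp hi).2
      rw [if_pos this]
    · refine Finset.sum_congr rfl fun i hi => ?_
      have : ¬ (i:ℕ) < n := (Finset.mem_filter.mp hi).2
      rw [if_neg this]
  have hzero : a * A + b * B = 0 := by
    ext j
    rw [hcoeff j, coeff_zero]
    by_cases hj : j < n + m
    · have h2 : ∑ i : Fin (n+m), v i * M i ⟨j, hj⟩ = 0 := by
        simpa [Matrix.vecMul, dotProduct] using congrFun hvM ⟨j, hj⟩
      refine Eq.trans (Finset.sum_congr rfl fun i _ => ?_) h2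
      rw [hM i ⟨j, hj⟩]
    · refine Finset.sum_eq_zero fun i _ => ?_
      have hi2 : (i:ℕ) < n + m := i.isLt
      split_ifs with h1 h2 h3
      · rw [coeff_eq_zero_of_natDegree_lt (show A.natDegree < j - (i:ℕ) by omega), mul_zero]
      · rw [mul_zero]
      · rw [coeff_eq_zero_of_natDegree_lt (show B.natDegree < j - ((i:ℕ) - n) by omega),
          mul_zero]
      · rw [mul_zero]
  have hane : ∀ i0 : Fin (n+m), (i0:ℕ) < n → a.coeff (i0:ℕ) = v i0 := by
    intro i0 h0
    rw [hacoeff]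
    rw [Finset.sum_eq_single i0]
    · rw [if_pos rfl]
    · intro l _ hne
      exact if_neg (fun hc => hne (Fin.ext hc.symm))
    · intro hni
      exact absurd (show i0 ∈ S from Finset.mem_filter.mpr ⟨Finset.mem_univ _, h0⟩) hni
  have hbne : ∀ i0 : Fin (n+m), ¬ (i0:ℕ) < n → b.coeff ((i0:ℕ) - n) = v i0 := by
    intro i0 h0
    rw [hbcoeff]
    rw [Finset.sum_eq_single i0]
    · rw [if_pos rfl]
    · intro l hl hne
      have hln : ¬ (l:ℕ) < n := (Finset.mem_filter.mp hl).2
      refine if_neg (fun hc => hne ?_)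
      have hl2 : (l:ℕ) < n + m := l.isLt
      have hi2 : (i0:ℕ) < n + m := i0.isLt
      exact Fin.ext (by omega)
    · intro hni
      exact absurd (show i0 ∈ T from Finset.mem_filter.mpr ⟨Finset.mem_univ _, h0⟩) hni
  have hadeg : a.degree < (n : WithBot ℕ) := by
    rw [degree_lt_iff_coeff_zero]
    intro l hl
    rw [hacoeff]
    refine Finset.sum_eq_zero fun i hi => ?_
    have : (i:ℕ) < n := (Finset.mem_filter.mp hi).2
    exact if_neg (by omega)
  have hbdeg : b.degree < (m : WithBot ℕ) := by
    rw [degree_lt_iff_coeff_zero]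
    intro l hl
    rw [hbcoeff]
    refine Finset.sum_eq_zero fun i hi => ?_
    have h1 : ¬ (i:ℕ) < n := (Finset.mem_filter.mp hi).2
    have h2 : (i:ℕ) < n + m := i.isLt
    exact if_neg (by omega)
  refine ⟨a, b, ?_, hadeg, hbdeg, hzero⟩
  obtain ⟨i, hvi⟩ := Function.ne_iff.mp hv0
  by_cases hi : (i:ℕ) < n
  · exact Or.inl (fun hcon => hvi (by rw [← hane i hi, hcon]; simp))
  · exact Or.inr (fun hcon => hvi (by rw [← hbne i hi, hcon]; simp))

/-- For monic irreducible `f, h ∈ K[x]` over a field `K` of characteristic 0, and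
`p(z) = res_x(h(x), f(x+z)) ∈ K[z]`: for `k ∈ ℤ`, `f(x+k) = h(x)` iff `k` is a root
of `p` and `deg f = deg h`; in particular (assuming `deg f = deg h`), `f` and `h`
are shift equivalent iff `p` has an integer root. -/
theorem shift_equivalence_via_resultant
    {K : Type*} [Field K] [CharZero K] (f h : K[X])
    (hfm : f.Monic) (hhm : h.Monic) (hfi : Irreducible f) (hhi : Irreducible h) :
    (∀ k : ℤ,
      f.comp (X + C (k : K)) = h ↔
        ((_root_.resultant (h.map (C : K →+* K[X]))
            ((f.map (C : K →+* K[X])).comp (X + C (X : K[X])))).IsRoot (k : K)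
          ∧ f.natDegree = h.natDegree)) ∧
    (f.natDegree = h.natDegree →
      ((∃ k : ℤ, f.comp (X + C (k : K)) = h) ↔
        ∃ k : ℤ,
          (_root_.resultant (h.map (C : K →+* K[X]))
            ((f.map (C : K →+* K[X])).comp (X + C (X : K[X])))).IsRoot (k : K))) := by
  set F : (K[X])[X] := h.map (C : K →+* K[X]) with hF
  set G : (K[X])[X] := (f.map (C : K →+* K[X])).comp (X + C (X : K[X])) with hG
  have hFdeg : F.natDegree = h.natDegree := hhm.natDegree_map _
  have hGdeg : G.natDegree = f.natDegree := by
    rw [hG, natDegree_comp, natDegree_X_add_C, mul_one, hfm.natDegree_map]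
  have hCe : ∀ k : K, (evalRingHom k).comp (C : K →+* K[X]) = RingHom.id K := by
    intro k; ext a; simp
  have hGmap : ∀ k : K, G.map (evalRingHom k) = f.comp (X + C k) := by
    intro k
    rw [hG, map_comp, map_map, hCe, Polynomial.map_id, Polynomial.map_add, map_X, map_C]
    simp
  have hFentry : ∀ (k : K) (l : ℕ), evalRingHom k (F.coeff l) = h.coeff l := by
    intro k l; rw [hF, coeff_map]; simp
  have hGentry : ∀ (k : K) (l : ℕ), evalRingHom k (G.coeff l) = (f.comp (X + C k)).coeff l := by
    intro k l; rw [← coeff_map, hGmap]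
  have hentry : ∀ (k : K) (i j : Fin (G.natDegree + F.natDegree)),
      ((sylvesterMatrix F G).map (evalRingHom k)) i j =
      if (i : ℕ) < G.natDegree then
        (if (i : ℕ) ≤ (j : ℕ) then h.coeff ((j:ℕ) - (i:ℕ)) else 0)
      else
        (if (i : ℕ) - G.natDegree ≤ (j : ℕ) then
          (f.comp (X + C k)).coeff ((j:ℕ) - ((i:ℕ) - G.natDegree)) else 0) := by
    intro k i j
    rw [Matrix.map_apply, sylvesterMatrix]
    split_ifs with h1 h2 h3
    · exact hFentry k _
    · exact map_zero _
    · exact hGentry k _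
    · exact map_zero _
  have hroot : ∀ k : K, (_root_.resultant F G).IsRoot k ↔
      ((sylvesterMatrix F G).map (evalRingHom k)).det = 0 := by
    intro k
    rw [IsRoot.def, _root_.resultant, show eval k (sylvesterMatrix F G).det
      = evalRingHom k (sylvesterMatrix F G).det from rfl, RingHom.map_det, RingHom.mapMatrix_apply]
  have hfn : 0 < f.natDegree := hfi.natDegree_pos
  have hhn : 0 < h.natDegree := hhi.natDegree_pos
  have main : ∀ k : ℤ,
      f.comp (X + C (k : K)) = h ↔
        ((_root_.resultant F G).IsRoot (k : K) ∧ f.natDegree = h.natDegree) := by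
    intro k
    constructor
    · intro heq
      have hcompdeg : (f.comp (X + C (k : K))).natDegree = f.natDegree := by
        rw [natDegree_comp, natDegree_X_add_C, mul_one]
      have hdeg : f.natDegree = h.natDegree := by rw [← hcompdeg, heq]
      refine ⟨?_, hdeg⟩
      rw [hroot]
      have hi0 : (0 : ℕ) < G.natDegree + F.natDegree := by omega
      have hi1 : G.natDegree < G.natDegree + F.natDegree := by omega
      refine Matrix.det_zero_of_row_eq (i := ⟨0, hi0⟩) (j := ⟨G.natDegree, hi1⟩)
        (fun hc => ?_) (funext fun j => ?_)
      · have h3 : (0:ℕ) = G.natDegree := congrArg Fin.val hc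
        omega
      · rw [hentry, hentry]
        have h0 : (0:ℕ) < G.natDegree := by omega
        rw [if_pos h0, if_neg (lt_irrefl G.natDegree), if_pos (Nat.zero_le _),
          if_pos (by omega : G.natDegree - G.natDegree ≤ (j:ℕ))]
        simp only [Nat.sub_zero, Nat.sub_self]
        rw [heq]
    · rintro ⟨hr, hdeg⟩
      rw [hroot] at hr
      have hB : (f.comp (X + C (k : K))).natDegree ≤ G.natDegree := by
        rw [natDegree_comp, natDegree_X_add_C, mul_one, hGdeg]
      have hA : h.natDegree ≤ F.natDegree := le_of_eq hFdeg.symm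
      obtain ⟨a, b, hab, hadeg, hbdeg, hzero⟩ :=
        syl_aux G.natDegree F.natDegree h (f.comp (X + C (k : K))) hA hB
          ((sylvesterMatrix F G).map (evalRingHom (k:K))) (hentry (k:K)) hr
      set g : K[X] := f.comp (X + C (k : K)) with hg
      have hgm : g.Monic := hfm.comp_X_add_C _
      have hgdeg : g.natDegree = h.natDegree := by
        rw [hg, natDegree_comp, natDegree_X_add_C, mul_one, hdeg]
      have hbne : b ≠ 0 := by
        intro hb0
        rcases hab with haz | hbz
        · apply haz
          have : a * h = 0 := by rw [hb0, zero_mul, add_zero] at hzero; exact hzero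
          exact (mul_eq_zero.mp this).resolve_right hhm.ne_zero
        · exact hbz hb0
      have hdvd : h ∣ b * g := ⟨-a, by linear_combination hzero⟩
      have hprime : Prime h := hhi.prime
      have hnotb : ¬ h ∣ b := by
        intro hd
        have := degree_le_of_dvd hd hbne
        rw [degree_eq_natDegree hhm.ne_zero] at this
        have : (h.natDegree : WithBot ℕ) < F.natDegree := lt_of_le_of_lt this hbdeg
        rw [hFdeg] at this
        exact absurd this (lt_irrefl _)
      have hdg : h ∣ g := ((hprime.dvd_mul.mp hdvd).resolve_left hnotb)
      obtain ⟨c, hc⟩ := hdg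
      have hcne : c ≠ 0 := by
        intro hc0
        rw [hc0, mul_zero] at hc
        exact hgm.ne_zero hc
      have hcdeg : c.natDegree = 0 := by
        have := hc ▸ hgdeg
        rw [natDegree_mul hhm.ne_zero hcne] at this
        omega
      have hcm : c.Monic := by
        have : g.leadingCoeff = h.leadingCoeff * c.leadingCoeff := by
          rw [hc, leadingCoeff_mul]
        rw [hgm.leadingCoeff, hhm.leadingCoeff, one_mul] at this
        exact this.symm
      have hc1 : c = 1 := hcm.natDegree_eq_zero.mp hcdeg
      rw [hc1, mul_one] at hc
      exact hc
  refine ⟨main, fun _ => ⟨fun ⟨k, hk⟩ => ⟨k, ((main k).mp hk).1⟩,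
    fun ⟨k, hk⟩ => ⟨k, (main k).mpr ⟨hk, ?_⟩⟩⟩⟩
  assumption
end
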